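/- Lower bound for general convex losses (Proposition 1): let K ≥ 1, R ≥ 1, T = RK, n = 4R, d = 1, f_1(x) = (L/2)x², and f_2 = ... = f_n = 0, so f(x) = (L/(2n))x². These functions are L-smooth and satisfy Assumptions 1 and 2 with μ = 0 and similarity constant c = 0. If Local (S)GD is run on this instance with any constant stepsize η ≤ 1/L from x^{(0)} = 1, then min_{t ∈ [T]}(f(x̄^{(t)}) − f*) ≥ KL/(16T), i.e. the error is Ω(KL/T). -/

import Mathlib

open scoped BigOperators

/-- Proposition 1 (lower bound for general convex losses): with T = RK, n = 4R, d = 1,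
f₁(x) = (L/2)x² and f₂ = ... = fₙ = 0 (so f(x) = (L/(2n))x²), the losses are L-smooth,
convex, satisfy interpolation, and have similarity constant c = 0; and if Local GD is run
with any constant stepsize η ≤ 1/L from x⁽⁰⁾ = 1, then
`min_{t ∈ [T]} (f(x̄⁽ᵗ⁾) - f*) ≥ KL/(16T)`, i.e. the error is Ω(KL/T). -/
theorem lower_bound_general_convex
    (L : ℝ) (hL : 0 < L)
    (K R T n : ℕ) (hK : 0 < K) (hR : 0 < R) (hT : T = R * K) (hn : n = 4 * R)
    -- the local losses and their derivatives
    (fi : Fin n → ℝ → ℝ)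
    (hfi : ∀ i x, fi i x = if (i : ℕ) = 0 then L / 2 * x ^ 2 else 0)
    (g : Fin n → ℝ → ℝ)
    (hg : ∀ i x, g i x = if (i : ℕ) = 0 then L * x else 0)
    -- the global objective f(x) = (L/(2n)) x²
    (f : ℝ → ℝ) (hf : ∀ x, f x = L / (2 * n) * x ^ 2)
    -- stepsize η ≤ 1/L
    (η : ℝ) (hη0 : 0 ≤ η) (hη : η ≤ 1 / L)
    -- the Local GD iterates, initialized at x⁽⁰⁾ = 1
    (X : ℕ → Fin n → ℝ)
    (hX0 : ∀ i, X 0 i = 1)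
    (hXrec : ∀ t i, X (t + 1) i =
      if (t + 1) % K = 0 then (n : ℝ)⁻¹ * ∑ j, (X t j - η * g j (X t j))
      else X t i - η * g i (X t i)) :
    -- every fᵢ has derivative g i, is L-smooth, convex,
    (∀ i x, HasDerivAt (fi i) (g i x) x) ∧
    (∀ i x y, |g i x - g i y| ≤ L * |x - y|) ∧
    (∀ i, ConvexOn ℝ Set.univ (fi i)) ∧
    -- interpolation holds at the global minimizer x* = 0,
    (∀ x, f 0 ≤ f x) ∧ (∀ i, g i 0 = 0) ∧
    -- the similarity constant of Definition 1 is c = 0,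
    (∀ c' : ℝ, 0 < c' →
      ¬ ∀ xs : Fin n → ℝ,
          (n : ℝ)⁻¹ * ∑ i, (fi i (xs i) - fi i 0)
            ≥ c' * (f ((n : ℝ)⁻¹ * ∑ i, xs i) - f 0)) ∧
    -- and the error lower bound holds for every t ∈ [T] = {1, ..., T}
    (∀ t : ℕ, 1 ≤ t → t ≤ T →
      f ((n : ℝ)⁻¹ * ∑ i, X t i) - f 0 ≥ K * L / (16 * T)) := by
  have hn4 : 4 ≤ n := by omega
  haveI : NeZero n := ⟨by omega⟩
  have hnR : (n : ℝ) = 4 * R := by exact_mod_cast congrArg Nat.cast hn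
  have hnpos : (0:ℝ) < n := by positivity
  have hnge : (4:ℝ) ≤ n := by exact_mod_cast hn4
  have hRpos : (0:ℝ) < R := by exact_mod_cast hR
  -- basic sum manipulation
  have hsum : ∀ (F : Fin n → ℝ), ∑ j, F j = F 0 + ∑ j ∈ Finset.univ.erase 0, F j :=
    fun F => (Finset.add_sum_erase _ F (Finset.mem_univ 0)).symm
  have hcard : (Finset.univ.erase (0 : Fin n)).card = n - 1 := by
    rw [Finset.card_erase_of_mem (Finset.mem_univ _)]
    simp
  have hconst : ∀ (c : ℝ), ∑ _j ∈ Finset.univ.erase (0 : Fin n), c = ((n:ℝ) - 1) * c := by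
    intro c
    rw [Finset.sum_const, hcard, nsmul_eq_mul]
    have h1 : ((n - 1 : ℕ) : ℝ) = (n:ℝ) - 1 := by
      have : 1 ≤ n := by omega
      push_cast [this]; ring
    rw [h1]
  have hval : ∀ j : Fin n, j ∈ Finset.univ.erase (0 : Fin n) → (j : ℕ) ≠ 0 := by
    intro j hj
    have := Finset.ne_of_mem_erase hj
    exact fun h => this (Fin.ext (by rw [h, Fin.val_zero]))
  set a : ℝ := 1 - η * L with ha_def
  have hηL : η * L ≤ 1 := by
    calc η * L ≤ (1 / L) * L := by nlinarith
      _ = 1 := by field_simp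
  have ha0 : 0 ≤ a := by simp only [ha_def]; linarith
  have ha1 : a ≤ 1 := by simp only [ha_def]; nlinarith
  set q : ℝ := ((n:ℝ) - 1 + a ^ K) / n with hq_def
  have haK0 : 0 ≤ a ^ K := pow_nonneg ha0 K
  have haK1 : a ^ K ≤ 1 := pow_le_one₀ ha0 ha1
  have hb0 : (0:ℝ) ≤ ((n:ℝ) - 1) / n := by
    apply div_nonneg <;> linarith
  have hb1 : ((n:ℝ) - 1) / n ≤ 1 := by
    rw [div_le_one hnpos]; linarith
  have hq_ge : ((n:ℝ) - 1) / n ≤ q := by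
    rw [hq_def]; gcongr; linarith
  have hq0 : 0 ≤ q := le_trans hb0 hq_ge
  have hq1 : q ≤ 1 := by
    rw [hq_def, div_le_one hnpos]; linarith
  -- the closed form of the iterates
  have key : ∀ t, ∀ i : Fin n,
      X t i = if (i : ℕ) = 0 then q ^ (t / K) * a ^ (t % K) else q ^ (t / K) := by
    intro t
    induction t with
    | zero =>
      intro i
      simp [hX0, Nat.zero_div, Nat.zero_mod]
    | succ t ih =>
      intro i
      rw [hXrec t i]
      by_cases h : (t + 1) % K = 0
      · rw [if_pos h]
        obtain ⟨m, hm⟩ := Nat.dvd_of_mod_eq_zero h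
        rcases m with _ | m'
        · omega
        · obtain ⟨p, hp⟩ : ∃ p, m' * K = p := ⟨_, rfl⟩
          have hm' : t + 1 = p + K := by rw [hm, ← hp]; ring
          have ht_eq : t = (K - 1) + m' * K := by rw [hp]; omega
          have htmod : t % K = K - 1 := by
            rw [ht_eq, Nat.add_mul_mod_self_right, Nat.mod_eq_of_lt (by omega)]
          have htdiv : t / K = m' := by
            rw [ht_eq, Nat.add_mul_div_right _ _ hK, Nat.div_eq_of_lt (by omega), Nat.zero_add]
          have ht1div : (t + 1) / K = m' + 1 := by
            have hmk : (m' + 1) * K = p + K := by rw [← hp]; ring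
            have h1 : t + 1 = 0 + (m' + 1) * K := by omega
            rw [h1, Nat.add_mul_div_right _ _ hK, Nat.zero_div, Nat.zero_add]
          -- compute the sum
          have hsum_eq : ∑ j, (X t j - η * g j (X t j)) = q ^ m' * (a ^ K + ((n:ℝ) - 1)) := by
            rw [hsum]
            have h0 : X t 0 - η * g 0 (X t 0) = a * (q ^ m' * a ^ (K - 1)) := by
              rw [hg, ih 0]
              simp only [Fin.val_zero, eq_self_iff_true, if_true, htdiv, htmod]
              ring
            have hrest : ∑ j ∈ Finset.univ.erase (0 : Fin n), (X t j - η * g j (X t j))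
                = ((n:ℝ) - 1) * q ^ m' := by
              rw [← hconst (q ^ m')]
              apply Finset.sum_congr rfl
              intro j hj
              rw [hg, ih j, if_neg (hval j hj), if_neg (hval j hj), htdiv]
              ring
            rw [h0, hrest]
            have haa : a * a ^ (K - 1) = a ^ K := by
              rw [mul_comm, ← pow_succ]
              congr 1
              omega
            calc a * (q ^ m' * a ^ (K - 1)) + ((n:ℝ) - 1) * q ^ m'
                = q ^ m' * (a * a ^ (K - 1)) + ((n:ℝ) - 1) * q ^ m' := by ring
              _ = q ^ m' * (a ^ K + ((n:ℝ) - 1)) := by rw [haa]; ring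
          rw [hsum_eq, ht1div, h, pow_zero]
          have : (n:ℝ)⁻¹ * (q ^ m' * (a ^ K + ((n:ℝ) - 1))) = q ^ (m' + 1) := by
            rw [pow_succ, hq_def]
            field_simp
            ring
          rw [this]
          by_cases hi : (i : ℕ) = 0 <;> simp [hi]
      · rw [if_neg h]
        have h1 : t % K < K := Nat.mod_lt _ hK
        have hdm := Nat.div_add_mod t K
        have hcomm : K * (t / K) = (t / K) * K := Nat.mul_comm _ _
        have h2 : t % K + 1 ≠ K := by
          intro hc
          apply h
          have hexp : (t / K + 1) * K = (t / K) * K + K := by ring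
          have h3 : t + 1 = (t / K + 1) * K := by omega
          rw [h3, Nat.mul_mod_left]
        have ht_eq : t + 1 = (t % K + 1) + (t / K) * K := by omega
        have htmod : (t + 1) % K = t % K + 1 := by
          rw [ht_eq, Nat.add_mul_mod_self_right, Nat.mod_eq_of_lt (by omega)]
        have htdiv : (t + 1) / K = t / K := by
          rw [ht_eq, Nat.add_mul_div_right _ _ hK, Nat.div_eq_of_lt (by omega), Nat.zero_add]
        rw [hg, ih i, htmod, htdiv]
        by_cases hi : (i : ℕ) = 0
        · simp only [if_pos hi]
          rw [pow_succ]
          ring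
        · simp only [if_neg hi]
          ring
  -- the average of the iterates
  have avg : ∀ t, (n : ℝ)⁻¹ * ∑ i, X t i = q ^ (t / K) * (((n:ℝ) - 1 + a ^ (t % K)) / n) := by
    intro t
    rw [hsum]
    have h0 : X t 0 = q ^ (t / K) * a ^ (t % K) := by rw [key t 0]; simp
    have hrest : ∑ j ∈ Finset.univ.erase (0 : Fin n), X t j = ((n:ℝ) - 1) * q ^ (t / K) := by
      rw [← hconst (q ^ (t / K))]
      exact Finset.sum_congr rfl fun j hj => by rw [key t j, if_neg (hval j hj)]
    rw [h0, hrest]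
    field_simp
    ring
  -- lower bound on the average for t ≤ T
  have avg_lb : ∀ t : ℕ, t ≤ T → (((n:ℝ) - 1) / n) ^ R ≤ (n : ℝ)⁻¹ * ∑ i, X t i := by
    intro t htT
    rw [avg t]
    have hdivR : t / K ≤ R := by
      apply Nat.div_le_of_le_mul
      calc t ≤ T := htT
        _ = R * K := hT
        _ ≤ K * R := by rw [Nat.mul_comm]
    rcases lt_or_eq_of_le hdivR with hlt | heq
    · have h1 : (((n:ℝ) - 1) / n) ^ R ≤ (((n:ℝ) - 1) / n) ^ (t / K + 1) :=
        pow_le_pow_of_le_one hb0 hb1 (by omega)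
      calc (((n:ℝ) - 1) / n) ^ R ≤ (((n:ℝ) - 1) / n) ^ (t / K + 1) := h1
        _ = (((n:ℝ) - 1) / n) ^ (t / K) * (((n:ℝ) - 1) / n) := by rw [pow_succ]
        _ ≤ q ^ (t / K) * (((n:ℝ) - 1 + a ^ (t % K)) / n) := by
            apply mul_le_mul
            · exact pow_le_pow_left₀ hb0 hq_ge _
            · gcongr <;> linarith [pow_nonneg ha0 (t % K)]
            · exact hb0
            · exact pow_nonneg hq0 _
    · -- t / K = R, so t = R * K = T and t % K = 0
      have htT' : t = R * K := by
        have h1 := Nat.div_add_mod t K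
        have h2 : t % K < K := Nat.mod_lt _ hK
        have h3 : K * (t / K) = R * K := by rw [heq]; ring
        omega
      have htmod : t % K = 0 := by rw [htT']; simp [Nat.mul_mod_left]
      rw [htmod, pow_zero, heq]
      have : ((n:ℝ) - 1 + 1) / n = 1 := by field_simp; ring
      rw [this, mul_one]
      exact pow_le_pow_left₀ hb0 hq_ge R
  -- Bernoulli: ((n-1)/n)^(2R) ≥ 1/2
  have bern : (1:ℝ) / 2 ≤ ((((n:ℝ) - 1) / n)) ^ (2 * R) := by
    have hx : (-2 : ℝ) ≤ -(1 / (n:ℝ)) := by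
      rw [neg_le_neg_iff]
      rw [div_le_iff₀ hnpos]
      linarith
    have hbern := one_add_mul_le_pow hx (2 * R)
    have heq1 : (1:ℝ) + -(1 / n) = ((n:ℝ) - 1) / n := by field_simp; ring
    have heq2 : (1:ℝ) + (↑(2 * R) : ℝ) * (-(1 / n)) = 1 / 2 := by
      push_cast
      rw [hnR]
      field_simp
      ring
    rw [heq1, heq2] at hbern
    exact hbern
  refine ⟨?_, ?_, ?_, ?_, ?_, ?_, ?_⟩
  · -- derivatives
    intro i x
    have hfe : fi i = fun y => if (i : ℕ) = 0 then L / 2 * y ^ 2 else 0 := funext (hfi i)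
    rw [hfe, hg]
    by_cases hi : (i : ℕ) = 0
    · simp only [if_pos hi]
      have h := (hasDerivAt_pow 2 x).const_mul (L / 2)
      exact h.congr_deriv (by norm_num <;> ring)
    · simp only [if_neg hi]
      exact hasDerivAt_const x 0
  · -- Lipschitz gradient
    intro i x y
    rw [hg, hg]
    by_cases hi : (i : ℕ) = 0
    · simp only [if_pos hi]
      rw [← mul_sub, abs_mul, abs_of_pos hL]
    · simp only [if_neg hi]
      simp
      positivity
  · -- convexity
    intro i
    have hfe : fi i = fun y => if (i : ℕ) = 0 then L / 2 * y ^ 2 else 0 := funext (hfi i)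
    rw [hfe]
    by_cases hi : (i : ℕ) = 0
    · simp only [if_pos hi]
      have h := (even_two.convexOn_pow (𝕜 := ℝ)).smul (c := L / 2) (by positivity)
      simpa [smul_eq_mul] using h
    · simp only [if_neg hi]
      exact convexOn_const 0 convex_univ
  · -- global minimum at 0
    intro x
    rw [hf, hf]
    have : L / (2 * (n:ℝ)) * 0 ^ 2 = 0 := by ring
    rw [this]
    positivity
  · -- interpolation
    intro i
    rw [hg]
    by_cases hi : (i : ℕ) = 0 <;> simp [hi]
  · -- similarity constant is 0
    intro c' hc' hall
    set xs : Fin n → ℝ := fun i => if (i : ℕ) = 0 then 0 else 1 with hxs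
    have h1 : ∑ i, (fi i (xs i) - fi i 0) = 0 := by
      apply Finset.sum_eq_zero
      intro i _
      rw [hfi, hfi]
      by_cases hi : (i : ℕ) = 0 <;> simp [hxs, hi]
      exact fun h => absurd (Fin.ext (by rw [hi, Fin.val_zero])) h
    have h2 : ∑ i, xs i = (n:ℝ) - 1 := by
      rw [hsum]
      have hx0 : xs 0 = 0 := by simp [hxs]
      have hrest : ∑ j ∈ Finset.univ.erase (0 : Fin n), xs j = ((n:ℝ) - 1) * 1 := by
        rw [← hconst 1]
        exact Finset.sum_congr rfl fun j hj => by simp [hxs, Finset.ne_of_mem_erase hj]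
      rw [hx0, hrest]; ring
    have := hall xs
    rw [h1, h2, mul_zero, hf, hf] at this
    have hn1 : (0:ℝ) < (n:ℝ) - 1 := by linarith
    have hv : (0:ℝ) < (n:ℝ)⁻¹ * ((n:ℝ) - 1) := by positivity
    have hD : (0:ℝ) < L / (2 * (n:ℝ)) := by positivity
    have hpos : 0 < c' * (L / (2 * (n:ℝ)) * ((n:ℝ)⁻¹ * ((n:ℝ) - 1)) ^ 2 - L / (2 * (n:ℝ)) * 0 ^ 2) := by
      have h3 : (0:ℝ) < ((n:ℝ)⁻¹ * ((n:ℝ) - 1)) ^ 2 := pow_pos hv 2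
      nlinarith [mul_pos (mul_pos hc' hD) h3]
    linarith
  · -- the lower bound
    intro t ht1 htT
    rw [hf, hf]
    have hlb := avg_lb t htT
    set xbar : ℝ := (n : ℝ)⁻¹ * ∑ i, X t i with hxbar
    have hsq : (((n:ℝ) - 1) / n) ^ (2 * R) ≤ xbar ^ 2 := by
      have h1 : ((((n:ℝ) - 1) / n) ^ R) ^ 2 ≤ xbar ^ 2 :=
        pow_le_pow_left₀ (pow_nonneg hb0 R) hlb 2
      calc (((n:ℝ) - 1) / n) ^ (2 * R) = ((((n:ℝ) - 1) / n) ^ R) ^ 2 := by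
            rw [← pow_mul, Nat.mul_comm]
        _ ≤ xbar ^ 2 := h1
    have hhalf : (1:ℝ) / 2 ≤ xbar ^ 2 := le_trans bern hsq
    have hTR : (T : ℝ) = (R:ℝ) * K := by exact_mod_cast congrArg Nat.cast hT
    have hKpos : (0:ℝ) < K := by exact_mod_cast hK
    have hTpos : (0:ℝ) < T := by rw [hTR]; positivity
    have hgoal : (K:ℝ) * L / (16 * T) = L / (2 * n) * (1 / 2) := by
      rw [hTR, hnR]
      field_simp
      ring
    rw [hgoal]
    have hz : L / (2 * (n:ℝ)) * 0 ^ 2 = 0 := by ring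
    rw [hz, sub_zero]
    have hco : (0:ℝ) ≤ L / (2 * n) := by positivity
    exact mul_le_mul_of_nonneg_left hhalf hco
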